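/- Let A ∈ Rmax^{n×n} and let λ_max be the maximal average weight |c|_w / |c|_l over all elementary circuits c of the precedence graph G(A) (assuming at least one circuit exists). Then λ_max is a max-plus eigenvalue of A. -/

import Mathlib

/-- The max-plus semiring carrier: ℝ ∪ {-∞}. -/
abbrev Rmax := WithBot ℝ

/-- Max-plus matrix product: [A ⊗ B]_{ij} = max_k ([A]_{ik} + [B]_{kj}). -/
def mpMul {m n p : ℕ} (A : Matrix (Fin m) (Fin n) Rmax)
    (B : Matrix (Fin n) (Fin p) Rmax) : Matrix (Fin m) (Fin p) Rmax :=
  fun i j => Finset.univ.sup fun k => A i k + B k j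

/-- Max-plus identity matrix. -/
def mpId (n : ℕ) : Matrix (Fin n) (Fin n) Rmax :=
  fun i j => if i = j then (0 : Rmax) else ⊥

/-- Max-plus matrix power. -/
def mpPow {n : ℕ} (A : Matrix (Fin n) (Fin n) Rmax) : ℕ → Matrix (Fin n) (Fin n) Rmax
  | 0 => mpId n
  | p + 1 => mpMul A (mpPow A p)

/-- Max-plus matrix-vector product. -/
def mpMulVec {m n : ℕ} (A : Matrix (Fin m) (Fin n) Rmax) (v : Fin n → Rmax) :
    Fin m → Rmax :=
  fun i => Finset.univ.sup fun k => A i k + v k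

/-- Irreducibility: the precedence graph is strongly connected (a path between
any two distinct vertices; arc (j,i) exists iff [A]_{ij} ≠ -∞, and a path of
length p from j to i exists iff [A^{⊗p}]_{ij} ≠ -∞). -/
def mpIrreducible {n : ℕ} (A : Matrix (Fin n) (Fin n) Rmax) : Prop :=
  ∀ i j : Fin n, i ≠ j → ∃ p : ℕ, 1 ≤ p ∧ mpPow A p i j ≠ ⊥

/-- The maximal average weight over all elementary circuits of the precedence
graph of A is a max-plus eigenvalue of A. -/
/- ### Auxiliary lemmas -/

theorem mpSup_add {α : Type*} (s : Finset α) (f : α → Rmax) (c : Rmax) :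
    s.sup f + c = s.sup (fun x => f x + c) :=
  Finset.comp_sup_eq_sup_comp (fun x => x + c)
    (fun x y => (max_add_add_right x y c).symm) (WithBot.bot_add c)

theorem mpAdd_sup {α : Type*} (s : Finset α) (f : α → Rmax) (c : Rmax) :
    c + s.sup f = s.sup (fun x => c + f x) :=
  Finset.comp_sup_eq_sup_comp (fun x => c + x)
    (fun x y => (max_add_add_left c x y).symm) (WithBot.add_bot c)

theorem mpLe_add_neg (x y : Rmax) (a : ℝ) (hxy : x + (a : Rmax) ≤ y) :
    x ≤ y + ((-a : ℝ) : Rmax) := by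
  calc x = x + (a : Rmax) + ((-a : ℝ) : Rmax) := by
        rw [add_assoc, ← WithBot.coe_add, add_neg_cancel, WithBot.coe_zero, add_zero]
    _ ≤ y + ((-a : ℝ) : Rmax) := add_le_add_left hxy _

theorem mpPow_one {n : ℕ} (A : Matrix (Fin n) (Fin n) Rmax) (i j : Fin n) :
    mpPow A 1 i j = A i j := by
  show (Finset.univ.sup fun k => A i k + mpId n k j) = A i j
  apply le_antisymm
  · refine Finset.sup_le fun k _ => ?_
    by_cases hk : k = j
    · subst hk; simp [mpId]
    · simp [mpId, hk]
  · refine le_trans ?_ (Finset.le_sup (Finset.mem_univ j))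
    simp [mpId]

/-- weight of the length-`p` path `g 0, g 1, ..., g p`. -/
def mpW {n : ℕ} (A : Matrix (Fin n) (Fin n) Rmax) (p : ℕ) (g : ℕ → Fin n) : Rmax :=
  ∑ k ∈ Finset.range p, A (g (k+1)) (g k)

theorem mpPath_le_pow {n : ℕ} (A : Matrix (Fin n) (Fin n) Rmax) (p : ℕ) (g : ℕ → Fin n) :
    mpW A p g ≤ mpPow A p (g p) (g 0) := by
  induction p with
  | zero => simp [mpW, mpPow, mpId]
  | succ p ih =>
    have : mpW A (p+1) g = A (g (p+1)) (g p) + mpW A p g := by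
      rw [mpW, Finset.sum_range_succ, add_comm]; rfl
    rw [this]
    calc A (g (p+1)) (g p) + mpW A p g ≤ A (g (p+1)) (g p) + mpPow A p (g p) (g 0) :=
          add_le_add_right ih _
      _ ≤ mpPow A (p+1) (g (p+1)) (g 0) :=
          Finset.le_sup (f := fun k => A (g (p+1)) k + mpPow A p k (g 0)) (Finset.mem_univ (g p))

theorem mpPow_eq_path {n : ℕ} (A : Matrix (Fin n) (Fin n) Rmax) (p : ℕ) (i j : Fin n)
    (hb : mpPow A p i j ≠ ⊥) :
    ∃ g : ℕ → Fin n, g 0 = j ∧ g p = i ∧ mpPow A p i j = mpW A p g := by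
  induction p generalizing i with
  | zero =>
    have hij : i = j := by
      by_contra hne
      simp [mpPow, mpId, hne] at hb
    exact ⟨fun _ => j, rfl, hij.symm, by simp [mpPow, mpId, hij, mpW]⟩
  | succ p ih =>
    have hne : (Finset.univ : Finset (Fin n)).Nonempty := ⟨i, Finset.mem_univ i⟩
    obtain ⟨k, -, hk⟩ := Finset.exists_mem_eq_sup Finset.univ hne
      (fun k => A i k + mpPow A p k j)
    have hkb : mpPow A p k j ≠ ⊥ := by
      intro hc
      apply hb
      show mpMul A (mpPow A p) i j = ⊥
      rw [mpMul] at *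
      rw [hk, hc, WithBot.add_bot]
    obtain ⟨g, hg0, hgp, hgw⟩ := ih k hkb
    refine ⟨fun m => if m ≤ p then g m else i, by simp [hg0], by simp, ?_⟩
    have hW : mpW A (p+1) (fun m => if m ≤ p then g m else i)
        = A i k + mpW A p g := by
      rw [mpW, Finset.sum_range_succ, add_comm]
      congr 1
      · simp [hgp]
      · exact Finset.sum_congr rfl fun m hm => by
          have hm' := Finset.mem_range.mp hm
          simp [Nat.le_of_lt hm', Nat.succ_le_of_lt hm']
    rw [hW, ← hgw]
    exact hk

theorem mpW_split {n : ℕ} (A : Matrix (Fin n) (Fin n) Rmax) (p a b : ℕ) (g : ℕ → Fin n)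
    (hab : a < b) (hbp : b ≤ p) (hg : g a = g b) :
    mpW A p g = mpW A (b - a) (fun k => g (a + k))
      + mpW A (p - (b - a)) (fun k => if k ≤ a then g k else g (k + (b - a))) := by
  have h1 : mpW A (b - a) (fun k => g (a + k)) = ∑ k ∈ Finset.Ico a b, A (g (k+1)) (g k) := by
    rw [Finset.sum_Ico_eq_sum_range]
    rfl
  have hapq : a ≤ p - (b - a) := by omega
  have h2 : mpW A (p - (b - a)) (fun k => if k ≤ a then g k else g (k + (b - a)))
      = (∑ k ∈ Finset.Ico 0 a, A (g (k+1)) (g k)) + ∑ k ∈ Finset.Ico b p, A (g (k+1)) (g k) := by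
    rw [mpW, Finset.range_eq_Ico, ← Finset.sum_Ico_consecutive _ (Nat.zero_le a) hapq]
    congr 1
    · refine Finset.sum_congr rfl fun k hk => ?_
      have hk' : k < a := (Finset.mem_Ico.mp hk).2
      simp only [if_pos (Nat.le_of_lt hk'), if_pos (Nat.succ_le_of_lt hk')]
    · rw [Finset.sum_Ico_eq_sum_range, Finset.sum_Ico_eq_sum_range]
      have hr : p - (b - a) - a = p - b := by omega
      rw [hr]
      refine Finset.sum_congr rfl fun k _ => ?_
      have h3 : ¬ (a + k + 1 ≤ a) := by omega
      simp only [if_neg h3]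
      rcases Nat.eq_zero_or_pos k with rfl | hkpos
      · simp only [Nat.add_zero, if_pos (le_refl a)]
        rw [hg]
        congr 2 <;> omega
      · have h4 : ¬ (a + k ≤ a) := by omega
        simp only [if_neg h4]
        congr 2 <;> omega
  have hmain : mpW A p g = (∑ k ∈ Finset.Ico 0 a, A (g (k+1)) (g k))
      + (∑ k ∈ Finset.Ico a b, A (g (k+1)) (g k))
      + ∑ k ∈ Finset.Ico b p, A (g (k+1)) (g k) := by
    rw [mpW, Finset.range_eq_Ico,
      ← Finset.sum_Ico_consecutive _ (Nat.zero_le b) hbp,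
      ← Finset.sum_Ico_consecutive _ (Nat.zero_le a) (Nat.le_of_lt hab)]
  rw [hmain, h1, h2]
  abel

theorem mpCircuit_le {n : ℕ} (A : Matrix (Fin n) (Fin n) Rmax) (lmax : ℝ)
    (hub : ∀ (l : ℕ), 1 ≤ l → ∀ v : Fin (l+1) → Fin n, v 0 = v (Fin.last l) →
      Function.Injective (fun k : Fin l => v k.castSucc) → ∀ r : ℝ,
      (∑ k : Fin l, A (v k.succ) (v k.castSucc)) = (((l : ℝ) * r : ℝ) : Rmax) → r ≤ lmax) :
    ∀ p : ℕ, 1 ≤ p → ∀ g : ℕ → Fin n, g p = g 0 →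
      mpW A p g ≤ (((p : ℝ) * lmax : ℝ) : Rmax) := by
  intro p
  induction p using Nat.strong_induction_on with
  | _ p ih =>
  intro hp g hg
  by_cases hbot : mpW A p g = ⊥
  · simp [hbot]
  obtain ⟨w, hw⟩ : ∃ w : ℝ, mpW A p g = (w : Rmax) :=
    ⟨(mpW A p g).unbot hbot, (WithBot.coe_unbot _ hbot).symm⟩
  by_cases hinj : Function.Injective (fun k : Fin p => g k.val)
  · set v : Fin (p + 1) → Fin n := fun k => g k.val with hv
    have hle : w / p ≤ lmax := by
      refine hub p hp v ?_ ?_ (w / p) ?_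
      · show g 0 = g p
        exact hg.symm
      · intro x y hxy
        exact hinj hxy
      · have hsum : (∑ k : Fin p, A (v k.succ) (v k.castSucc)) = mpW A p g := by
          rw [mpW, ← Fin.sum_univ_eq_sum_range (fun k => A (g (k+1)) (g k)) p]
          rfl
        rw [hsum, hw]
        congr 1
        field_simp
    have hple : w ≤ (p : ℝ) * lmax := by
      have hp0 : (0 : ℝ) < p := by exact_mod_cast hp
      calc w = (p : ℝ) * (w / p) := by field_simp
        _ ≤ (p : ℝ) * lmax := by nlinarith
    rw [hw]
    exact_mod_cast hple
  · obtain ⟨x, y, hxy, hne⟩ := Function.not_injective_iff.mp hinj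
    have key : ∀ a b : ℕ, a < b → b < p → g a = g b →
        mpW A p g ≤ (((p : ℝ) * lmax : ℝ) : Rmax) := by
      intro a b hab hbp hgab
      have hq1 : 1 ≤ b - a := by omega
      have hqp : b - a < p := by omega
      have hsplit := mpW_split A p a b g hab (Nat.le_of_lt hbp) hgab
      have hc1 : mpW A (b - a) (fun k => g (a + k)) ≤ (((b - a : ℕ) : ℝ) * lmax : ℝ) := by
        refine ih (b - a) hqp hq1 _ ?_
        show g (a + (b - a)) = g (a + 0)
        rw [Nat.add_sub_cancel' (Nat.le_of_lt hab), Nat.add_zero, hgab]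
      have hc2 : mpW A (p - (b - a)) (fun k => if k ≤ a then g k else g (k + (b - a)))
          ≤ (((p - (b - a) : ℕ) : ℝ) * lmax : ℝ) := by
        refine ih (p - (b - a)) (by omega) (by omega) _ ?_
        have h1 : ¬ (p - (b - a) ≤ a) := by omega
        have h2 : p - (b - a) + (b - a) = p := by omega
        simp only [if_neg h1, h2, if_pos (Nat.zero_le a), hg]
      rw [hsplit]
      calc mpW A (b - a) (fun k => g (a + k))
            + mpW A (p - (b - a)) (fun k => if k ≤ a then g k else g (k + (b - a)))
          ≤ ((((b - a : ℕ) : ℝ) * lmax : ℝ) : Rmax)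
            + ((((p - (b - a) : ℕ) : ℝ) * lmax : ℝ) : Rmax) := add_le_add hc1 hc2
        _ = (((p : ℝ) * lmax : ℝ) : Rmax) := by
            rw [← WithBot.coe_add]
            congr 1
            have hsum : ((b - a : ℕ) : ℝ) + ((p - (b - a) : ℕ) : ℝ) = (p : ℝ) := by
              have h5 : (b - a) + (p - (b - a)) = p := by omega
              exact_mod_cast congrArg (Nat.cast : ℕ → ℝ) h5
            rw [← add_mul, hsum]
    rcases Nat.lt_or_ge x.val y.val with hlt | hge
    · exact key x.val y.val hlt y.isLt hxy
    · have hlt : y.val < x.val := by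
        rcases Nat.lt_or_ge y.val x.val with h | h
        · exact h
        · exact absurd (Fin.ext (Nat.le_antisymm h hge)) hne
      exact key y.val x.val hlt x.isLt hxy.symm

theorem mp_max_cycle_mean_eigenvalue {n : ℕ} (A : Matrix (Fin n) (Fin n) Rmax)
    (lmax : ℝ)
    (h : IsGreatest {r : ℝ | ∃ l : ℕ, 1 ≤ l ∧ ∃ v : Fin (l + 1) → Fin n,
        v 0 = v (Fin.last l) ∧
        Function.Injective (fun k : Fin l => v k.castSucc) ∧
        (∑ k : Fin l, A (v k.succ) (v k.castSucc)) = (((l : ℝ) * r : ℝ) : Rmax)}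
      lmax) :
    ∃ v : Fin n → Rmax, v ≠ (fun _ => (⊥ : Rmax)) ∧
      mpMulVec A v = fun i => (lmax : Rmax) + v i := by
  obtain ⟨⟨l, hl, v, hv0, hvinj, hvsum⟩, hub'⟩ := h
  have hub : ∀ (l : ℕ), 1 ≤ l → ∀ v : Fin (l+1) → Fin n, v 0 = v (Fin.last l) →
      Function.Injective (fun k : Fin l => v k.castSucc) → ∀ r : ℝ,
      (∑ k : Fin l, A (v k.succ) (v k.castSucc)) = (((l : ℝ) * r : ℝ) : Rmax) → r ≤ lmax :=
    fun l hl v h1 h2 r h3 => hub' ⟨l, hl, v, h1, h2, h3⟩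
  have hCirc := mpCircuit_le A lmax hub
  -- the critical circuit as a ℕ-indexed path
  set g : ℕ → Fin n := fun k => if hk : k ≤ l then v ⟨k, by omega⟩ else v 0 with hgdef
  set η : Fin n := v 0 with hη
  have hg0 : g 0 = η := by simp [hgdef, hη]
  have hgl : g l = g 0 := by
    simp only [hgdef, dif_pos (le_refl l), dif_pos (Nat.zero_le l)]
    have : (⟨l, by omega⟩ : Fin (l+1)) = Fin.last l := rfl
    rw [this, ← hv0]
    rfl
  have hWg : mpW A l g = (((l : ℝ) * lmax : ℝ) : Rmax) := by
    rw [mpW, ← Fin.sum_univ_eq_sum_range (fun k => A (g (k+1)) (g k)) l, ← hvsum]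
    refine Finset.sum_congr rfl fun k _ => ?_
    have h1 : g (k.val + 1) = v k.succ := by
      simp only [hgdef, dif_pos (show k.val + 1 ≤ l from k.isLt)]
      rfl
    have h2 : g k.val = v k.castSucc := by
      simp only [hgdef, dif_pos (Nat.le_of_lt k.isLt)]
      rfl
    rw [h1, h2]
  have hpowηη : (((l : ℝ) * lmax : ℝ) : Rmax) ≤ mpPow A l η η := by
    have := mpPath_le_pow A l g
    rw [hgl, hg0, hWg] at this
    exact this
  set N : ℕ := l + n with hN
  have hlN : l ∈ Finset.Icc 1 N := Finset.mem_Icc.mpr ⟨hl, Nat.le_add_right l n⟩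
  -- the candidate eigenvector
  set w : Fin n → Rmax := fun i =>
    (Finset.Icc 1 N).sup (fun p => mpPow A p i η + ((-(p * lmax) : ℝ) : Rmax)) with hwdef
  have hwη : ((0 : ℝ) : Rmax) ≤ w η := by
    have h1 : ((0 : ℝ) : Rmax) ≤ mpPow A l η η + ((-(l * lmax) : ℝ) : Rmax) := by
      calc ((0 : ℝ) : Rmax) = (((l : ℝ) * lmax : ℝ) : Rmax) + ((-(l * lmax) : ℝ) : Rmax) := by
            rw [← WithBot.coe_add]; norm_num
        _ ≤ _ := add_le_add_left hpowηη _
    exact le_trans h1 (Finset.le_sup (f := fun p => mpPow A p η η + ((-(p * lmax) : ℝ) : Rmax)) hlN)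
  refine ⟨w, ?_, ?_⟩
  · intro hw
    have := congrFun hw η
    rw [this] at hwη
    exact WithBot.coe_ne_bot (le_bot_iff.mp hwη)
  -- the eigen-equation
  funext i
  -- shortening bound for the (N+1)-st power
  have hshort : mpPow A (N+1) i η ≤
      (Finset.Icc 1 N).sup (fun p => mpPow A p i η + ((((N+1-p : ℕ) : ℝ) * lmax : ℝ) : Rmax)) := by
    by_cases hb : mpPow A (N+1) i η = ⊥
    · rw [hb]; exact bot_le
    obtain ⟨g', hg'0, hg'N, heq⟩ := mpPow_eq_path A (N+1) i η hb
    obtain ⟨x, y, hne, hxy⟩ := Fintype.exists_ne_map_eq_of_card_lt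
      (fun k : Fin (n+1) => g' k.val) (by simp)
    have key : ∀ a b : ℕ, a < b → b ≤ n → g' a = g' b →
        mpPow A (N+1) i η ≤
        (Finset.Icc 1 N).sup (fun p => mpPow A p i η + ((((N+1-p : ℕ) : ℝ) * lmax : ℝ) : Rmax)) := by
      intro a b hab hbn hgab
      set q : ℕ := b - a with hq
      have hbN : b ≤ N + 1 := by omega
      have hsplit := mpW_split A (N+1) a b g' hab hbN hgab
      have hc1 : mpW A q (fun k => g' (a + k)) ≤ (((q : ℝ) * lmax : ℝ) : Rmax) := by
        refine hCirc q (by omega) _ ?_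
        show g' (a + q) = g' (a + 0)
        have : a + q = b := by omega
        rw [this, Nat.add_zero, hgab]
      set p' : ℕ := N + 1 - q with hp'
      have hp'mem : p' ∈ Finset.Icc 1 N := Finset.mem_Icc.mpr ⟨by omega, by omega⟩
      set g'' : ℕ → Fin n := fun k => if k ≤ a then g' k else g' (k + q) with hg''
      have hc2 : mpW A p' g'' ≤ mpPow A p' i η := by
        have h1 : g'' p' = i := by
          have hna : ¬ (p' ≤ a) := by omega
          simp only [hg'', if_neg hna]
          have : p' + q = N + 1 := by omega
          rw [this, hg'N]
        have h2 : g'' 0 = η := by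
          simp only [hg'', if_pos (Nat.zero_le a)]
          exact hg'0
        have := mpPath_le_pow A p' g''
        rw [h1, h2] at this
        exact this
      calc mpPow A (N+1) i η = mpW A q (fun k => g' (a + k)) + mpW A p' g'' := by
            rw [heq, hsplit]
        _ ≤ (((q : ℝ) * lmax : ℝ) : Rmax) + mpPow A p' i η := add_le_add hc1 hc2
        _ = mpPow A p' i η + ((((N+1-p' : ℕ) : ℝ) * lmax : ℝ) : Rmax) := by
            have hq6 : N + 1 - p' = q := by omega
            rw [add_comm, hq6]
        _ ≤ _ := Finset.le_sup (f := fun p => mpPow A p i η + ((((N+1-p : ℕ) : ℝ) * lmax : ℝ) : Rmax)) hp'mem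
    rcases Nat.lt_or_ge x.val y.val with hlt | hge
    · exact key x.val y.val hlt (Nat.lt_succ_iff.mp y.isLt) hxy
    · have hlt : y.val < x.val := by
        rcases Nat.lt_or_ge y.val x.val with h' | h'
        · exact h'
        · exact absurd (Fin.ext (Nat.le_antisymm h' hge)) hne
      exact key y.val x.val hlt (Nat.lt_succ_iff.mp x.isLt) hxy.symm
  -- now the main computation
  show (Finset.univ.sup fun k => A i k + w k) = (lmax : Rmax) + w i
  have hLHS : (Finset.univ.sup fun k => A i k + w k)
      = (Finset.Icc 1 N).sup (fun p => mpPow A (p+1) i η + ((-(p * lmax) : ℝ) : Rmax)) := by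
    have h1 : ∀ k, A i k + w k
        = (Finset.Icc 1 N).sup (fun p => A i k + mpPow A p k η + ((-(p * lmax) : ℝ) : Rmax)) := by
      intro k
      rw [hwdef, mpAdd_sup]
      refine Finset.sup_congr rfl fun p _ => ?_
      rw [add_assoc]
    calc (Finset.univ.sup fun k => A i k + w k)
        = Finset.univ.sup (fun k => (Finset.Icc 1 N).sup
            (fun p => A i k + mpPow A p k η + ((-(p * lmax) : ℝ) : Rmax))) := by
          exact Finset.sup_congr rfl fun k _ => h1 k
      _ = (Finset.Icc 1 N).sup (fun p => Finset.univ.sup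
            (fun k => A i k + mpPow A p k η + ((-(p * lmax) : ℝ) : Rmax))) :=
          Finset.sup_comm _ _ _
      _ = (Finset.Icc 1 N).sup (fun p => mpPow A (p+1) i η + ((-(p * lmax) : ℝ) : Rmax)) := by
          refine Finset.sup_congr rfl fun p _ => ?_
          rw [← mpSup_add]
          rfl
  have hRHS : (lmax : Rmax) + w i
      = (Finset.Icc 1 N).sup (fun p => mpPow A p i η + ((lmax - p * lmax : ℝ) : Rmax)) := by
    rw [hwdef, mpAdd_sup]
    refine Finset.sup_congr rfl fun p _ => ?_
    rw [add_comm ((lmax : ℝ) : Rmax), add_assoc, ← WithBot.coe_add]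
    congr 2
    ring
  rw [hLHS, hRHS]
  apply le_antisymm
  · refine Finset.sup_le fun p hp => ?_
    obtain ⟨hp1, hpN⟩ := Finset.mem_Icc.mp hp
    by_cases hpN' : p < N
    · refine le_trans (le_of_eq ?_) (Finset.le_sup
        (f := fun p => mpPow A p i η + ((lmax - p * lmax : ℝ) : Rmax))
        (Finset.mem_Icc.mpr ⟨by omega, by omega⟩ : p + 1 ∈ Finset.Icc 1 N))
      congr 2
      push_cast
      ring
    · have hpeq : p = N := by omega
      subst hpeq
      have h2 : mpPow A (N+1) i η + ((-(N * lmax) : ℝ) : Rmax) ≤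
          (Finset.Icc 1 N).sup (fun p => mpPow A p i η
            + ((((N+1-p : ℕ) : ℝ) * lmax : ℝ) : Rmax)) + ((-(N * lmax) : ℝ) : Rmax) :=
        add_le_add_left hshort _
      refine le_trans h2 (le_of_eq ?_)
      rw [mpSup_add]
      refine Finset.sup_congr rfl fun p' hp' => ?_
      obtain ⟨hp'1, hp'N⟩ := Finset.mem_Icc.mp hp'
      rw [add_assoc, ← WithBot.coe_add]
      congr 2
      have : ((N + 1 - p' : ℕ) : ℝ) = (N : ℝ) + 1 - (p' : ℝ) := by
        have h5 : N + 1 - p' + p' = N + 1 := by omega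
        have := congrArg (Nat.cast : ℕ → ℝ) h5
        push_cast at this
        linarith
      rw [this]
      ring
  · refine Finset.sup_le fun p hp => ?_
    obtain ⟨hp1, hpN⟩ := Finset.mem_Icc.mp hp
    by_cases hp2 : 2 ≤ p
    · refine le_trans (le_of_eq ?_) (Finset.le_sup
        (f := fun p => mpPow A (p+1) i η + ((-(p * lmax) : ℝ) : Rmax))
        (Finset.mem_Icc.mpr ⟨by omega, by omega⟩ : p - 1 ∈ Finset.Icc 1 N))
      have h5 : p - 1 + 1 = p := by omega
      simp only [h5]
      congr 2
      have : ((p - 1 : ℕ) : ℝ) = (p : ℝ) - 1 := by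
        have h6 := congrArg (Nat.cast : ℕ → ℝ) h5
        push_cast at h6
        linarith
      rw [this]
      ring
    · have hpeq : p = 1 := by omega
      subst hpeq
      have h1 : mpPow A 1 i η + ((lmax - ((1:ℕ):ℝ) * lmax : ℝ) : Rmax) = A i η := by
        rw [mpPow_one]
        norm_num
      rw [h1]
      have h2 : A i η + (((l : ℝ) * lmax : ℝ) : Rmax) ≤ mpPow A (l+1) i η := by
        calc A i η + (((l : ℝ) * lmax : ℝ) : Rmax) ≤ A i η + mpPow A l η η :=
              add_le_add_right hpowηη _
          _ ≤ mpPow A (l+1) i η :=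
              Finset.le_sup (f := fun k => A i k + mpPow A l k η) (Finset.mem_univ η)
      have h3 := mpLe_add_neg _ _ _ h2
      refine le_trans h3 (le_trans (le_of_eq ?_) (Finset.le_sup
        (f := fun p => mpPow A (p+1) i η + ((-(p * lmax) : ℝ) : Rmax)) hlN))
      rfl
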